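/- Let B ∈ F_q^{ρ×L} be in reduced row echelon form with full row rank ρ and let v ∈ F_q^L have zero entries in all pivot columns of B. Then the number of pairs (w, j) with w ∈ F_q^ρ and j ∈ {1,…,L} satisfying w·B = e_j − v is at most ρ + 1. -/
import Mathlib


/-- `B` in RREF with full row rank `ρ` (pivot map `p`), `v` vanishing on the
pivot columns of `B`. The number of pairs `(w, j)` with `w · B = e_j − v` is at most
`ρ + 1`. -/
theorem stmt3 {F : Type*} [Field F] [Fintype F] {ρ L : ℕ}
    (B : Matrix (Fin ρ) (Fin L) F) (p : Fin ρ → Fin L)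
    (hmono : StrictMono p)
    (hpiv1 : ∀ i, B i (p i) = 1)
    (hpivcol : ∀ i i', i' ≠ i → B i' (p i) = 0)
    (hlead : ∀ i (j : Fin L), (j : ℕ) < (p i : ℕ) → B i j = 0)
    (v : Fin L → F) (hv : ∀ r, v (p r) = 0) :
    Set.ncard {x : (Fin ρ → F) × Fin L |
      Matrix.vecMul x.1 B = Pi.single x.2 1 - v} ≤ ρ + 1 := by
  classical
  set S := {x : (Fin ρ → F) × Fin L | Matrix.vecMul x.1 B = Pi.single x.2 1 - v} with hS
  -- key: for x in S, the i-th coordinate of w is determined by j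
  have key : ∀ x : (Fin ρ → F) × Fin L, x ∈ S →
      ∀ i, x.1 i = (Pi.single x.2 1 : Fin L → F) (p i) := by
    intro x hx i
    have h1 : Matrix.vecMul x.1 B (p i) = x.1 i := by
      simp only [Matrix.vecMul, dotProduct]
      rw [Finset.sum_eq_single i]
      · simp [hpiv1 i]
      · intro b _ hb; simp [hpivcol i b hb]
      · simp
    have h2 := congrFun hx (p i)
    rw [h1] at h2
    simpa [hv i] using h2
  have hle : Nat.card S ≤ Nat.card (Option (Fin ρ)) := by
    apply Nat.card_le_card_of_injective (f := fun x : S =>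
      if h : ∃ i, p i = (x : (Fin ρ → F) × Fin L).2 then some h.choose else none)
    intro a b hab
    by_cases ha : ∃ i, p i = (a : (Fin ρ → F) × Fin L).2
    · by_cases hb : ∃ i, p i = (b : (Fin ρ → F) × Fin L).2
      · simp only [dif_pos ha, dif_pos hb, Option.some_inj] at hab
        have hja := ha.choose_spec
        have hjb := hb.choose_spec
        have hjj : (a : (Fin ρ → F) × Fin L).2 = (b : (Fin ρ → F) × Fin L).2 := by
          rw [← hja, ← hjb, hab]
        ext1
        refine Prod.ext ?_ hjj
        funext i
        rw [key _ a.2 i, key _ b.2 i, hjj]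
      · simp [dif_pos ha, dif_neg hb] at hab
    · by_cases hb : ∃ i, p i = (b : (Fin ρ → F) × Fin L).2
      · simp [dif_neg ha, dif_pos hb] at hab
      · -- both w's are 0, and v = single j 1 = single j' 1 forces j = j'
        have hwa : (a : (Fin ρ → F) × Fin L).1 = 0 := by
          funext i
          rw [key _ a.2 i]
          exact Pi.single_eq_of_ne (fun h => ha ⟨i, h⟩) 1
        have hwb : (b : (Fin ρ → F) × Fin L).1 = 0 := by
          funext i
          rw [key _ b.2 i]
          exact Pi.single_eq_of_ne (fun h => hb ⟨i, h⟩) 1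
        have hva : Pi.single (a : (Fin ρ → F) × Fin L).2 (1:F) = v := by
          have := a.2
          rw [Set.mem_setOf_eq, hwa] at this
          simp only [Matrix.zero_vecMul] at this
          have := this.symm
          rwa [sub_eq_zero] at this
        have hvb : Pi.single (b : (Fin ρ → F) × Fin L).2 (1:F) = v := by
          have := b.2
          rw [Set.mem_setOf_eq, hwb] at this
          simp only [Matrix.zero_vecMul] at this
          have := this.symm
          rwa [sub_eq_zero] at this
        have hjj : (a : (Fin ρ → F) × Fin L).2 = (b : (Fin ρ → F) × Fin L).2 := by
          have h := hva.trans hvb.symm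
          by_contra hne
          have := congrFun h (a : (Fin ρ → F) × Fin L).2
          rw [Pi.single_eq_same, Pi.single_eq_of_ne hne] at this
          exact one_ne_zero this
        ext1
        refine Prod.ext ?_ hjj
        rw [hwa, hwb]
  calc Set.ncard S = Nat.card S := (Nat.card_coe_set_eq S).symm
    _ ≤ Nat.card (Option (Fin ρ)) := hle
    _ = ρ + 1 := by simp [Nat.card_eq_fintype_card]
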